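/- For every ℓ ∈ ℕ, the k-linear map D_ℓ : A → A determined on basis elements by D_ℓ(a_{j,i}s^α) := (2α + |i−j|)·a_{j,i}s^{α+ℓ} is a derivation of A: D_ℓ(x·y) = D_ℓ(x)·y + x·D_ℓ(y) for all x, y ∈ A. (These derivations realize the degree-1 A∞-natural transformations id ⇒ id of the paper, η¹(a) = 𝔮(a)·(1/2)Σ_ℓ σ_ℓ a s^ℓ, where 𝔮(a_{j,i}s^α) = 2α + |i−j| is the q-grading.) -/

import Mathlib

/-- The dot-count correction `δ(i,j,k)` in the KLRW/Coulomb-branch algebra. -/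
def dlt (i j k : ℤ) : ℕ :=
  if 0 ≤ (i - j) * (j - k) then 0 else min (i - j).natAbs (j - k).natAbs

namespace KLRW

/-- Index of a basis element `a_{j,i}s^α`: `(j, i, α)` (target, source, number of dots). -/
abbrev B (n : ℕ) := Fin (n + 1) × Fin (n + 1) × ℕ

/-- The underlying free `k`-module of the KLRW algebra of the Fukaya category of the
Coulomb branch `M(•,1)` with `n` punctures: the free module on the symbols `a_{j,i}s^α`. -/
abbrev A (n : ℕ) (k : Type*) [Field k] := B n →₀ k

variable (n : ℕ) (k : Type*) [Field k]

/-- `δ(i,j,l)` evaluated on vertex indices. -/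
def dd (i j l : Fin (n + 1)) : ℕ := dlt ((i : ℕ) : ℤ) ((j : ℕ) : ℤ) ((l : ℕ) : ℤ)

/-- The basis element `a_{j,i}s^α`. -/
noncomputable def bas (j i : Fin (n + 1)) (α : ℕ) : A n k := Finsupp.single (j, i, α) 1

/-- Product of two basis elements:
`(a_{k,j'}s^β)·(a_{j,i}s^α) = a_{k,i}s^{β+α+δ(i,j,k)}` if `j' = j`, and `0` otherwise. -/
noncomputable def mulB (x y : B n) : A n k :=
  if x.2.1 = y.1 then
    Finsupp.single (x.1, y.2.1, x.2.2 + y.2.2 + dd n y.2.1 y.1 x.1) 1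
  else 0

/-- The `k`-bilinear multiplication on `A` determined by `mulB` on basis elements. -/
noncomputable def mul (x y : A n k) : A n k :=
  x.sum fun xb c => y.sum fun yb d => (c * d) • mulB n k xb yb

/-- The element `1 = Σ_{i=0}^n e_i` where `e_i = a_{i,i}s^0`. -/
noncomputable def one : A n k := Finset.univ.sum fun i : Fin (n + 1) => bas n k i i 0

end KLRW

/-- The key triangle-inequality defect identity:
`|i−j| + |j−l| = |i−l| + 2·δ(i,j,l)`. -/
lemma dlt_key (i j l : ℤ) : (i-j).natAbs + (j-l).natAbs = (i-l).natAbs + 2 * dlt i j l := by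
  unfold dlt
  split_ifs with h
  · rcases mul_nonneg_iff.mp h with ⟨h1,h2⟩|⟨h1,h2⟩ <;> omega
  · rcases mul_neg_iff.mp (lt_of_not_ge h) with ⟨h1,h2⟩|⟨h1,h2⟩ <;> omega

namespace KLRW
variable (n : ℕ) (k : Type*) [Field k]

lemma mul_zero_left (y : A n k) : mul n k 0 y = 0 := by simp [mul]

lemma mul_zero_right (x : A n k) : mul n k x 0 = 0 := by simp [mul]

lemma mul_add_left (x x' y : A n k) :
    mul n k (x + x') y = mul n k x y + mul n k x' y := by
  unfold mul
  rw [Finsupp.sum_add_index' (by intro a; simp) ?_]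
  intro a c c'
  rw [← Finsupp.sum_add]
  exact Finsupp.sum_congr fun yb _ => by simp [add_mul, add_smul]

lemma mul_add_right (x y y' : A n k) :
    mul n k x (y + y') = mul n k x y + mul n k x y' := by
  unfold mul
  rw [← Finsupp.sum_add]
  exact Finsupp.sum_congr fun xb _ =>
    Finsupp.sum_add_index' (by intro a; simp) (by intro a d d'; simp [mul_add, add_smul])

lemma mul_single_single (b b' : B n) (c d : k) :
    mul n k (Finsupp.single b c) (Finsupp.single b' d) = (c * d) • mulB n k b b' := by
  unfold mul
  rw [Finsupp.sum_single_index (by simp [Finsupp.sum]), Finsupp.sum_single_index (by simp)]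

end KLRW

/-- For each `ℓ`, the `k`-linear map `D_ℓ : A → A` determined on basis elements by
`D_ℓ(a_{j,i}s^α) = (2α + |i−j|)·a_{j,i}s^{α+ℓ}` is a derivation of the KLRW algebra:
`D_ℓ(x·y) = D_ℓ(x)·y + x·D_ℓ(y)`.  (These derivations realize the degree-1 A∞-natural
transformations `id ⇒ id`, via the q-grading `𝔮(a_{j,i}s^α) = 2α + |i−j|`.) -/
theorem klrw_qgrading_derivation (n : ℕ) (hn : 1 ≤ n) (k : Type*) [Field k] (ℓ : ℕ)
    (D : KLRW.A n k →ₗ[k] KLRW.A n k)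
    (hD : ∀ (j i : Fin (n + 1)) (α : ℕ),
      D (KLRW.bas n k j i α)
        = ((2 * α + (((i : ℕ) : ℤ) - ((j : ℕ) : ℤ)).natAbs : ℕ) : k) •
            KLRW.bas n k j i (α + ℓ)) :
    ∀ x y : KLRW.A n k,
      D (KLRW.mul n k x y) = KLRW.mul n k (D x) y + KLRW.mul n k x (D y) := by
  -- `D` on a general single
  have hDs : ∀ (b : KLRW.B n) (c : k),
      D (Finsupp.single b c)
        = Finsupp.single (b.1, b.2.1, b.2.2 + ℓ)
            (c * ((2 * b.2.2 + (((b.2.1 : ℕ) : ℤ) - ((b.1 : ℕ) : ℤ)).natAbs : ℕ) : k)) := by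
    intro b c
    obtain ⟨j, i, α⟩ := b
    have : (Finsupp.single (j, i, α) c : KLRW.A n k) = c • KLRW.bas n k j i α := by
      rw [KLRW.bas, Finsupp.smul_single, smul_eq_mul, mul_one]
    rw [this, map_smul, hD, KLRW.bas, smul_smul, Finsupp.smul_single, smul_eq_mul, mul_one]
  intro x y
  induction x using Finsupp.induction_linear with
  | zero => simp [KLRW.mul_zero_left, map_zero]
  | add f g hf hg =>
    rw [KLRW.mul_add_left, map_add, map_add, KLRW.mul_add_left, KLRW.mul_add_left, hf, hg]
    abel
  | single xb c =>
    induction y using Finsupp.induction_linear with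
    | zero => simp [KLRW.mul_zero_right, map_zero]
    | add f g hf hg =>
      rw [KLRW.mul_add_right, map_add, map_add, KLRW.mul_add_right, KLRW.mul_add_right, hf, hg]
      abel
    | single yb d =>
      obtain ⟨j', i', β⟩ := xb
      obtain ⟨j, i, α⟩ := yb
      rw [KLRW.mul_single_single, hDs, hDs, KLRW.mul_single_single, KLRW.mul_single_single]
      by_cases hij : i' = j
      · subst hij
        simp only [KLRW.mulB, eq_self_iff_true, if_true]
        rw [map_smul, hDs]
        simp only [Finsupp.smul_single, smul_eq_mul]
        set δ := KLRW.dd n i i' j' with hδ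
        have e1 : β + ℓ + α + δ = β + α + δ + ℓ := by omega
        have e2 : β + (α + ℓ) + δ = β + α + δ + ℓ := by omega
        rw [e1, e2, ← Finsupp.single_add]
        congr 1
        have hkey := dlt_key ((i : ℕ) : ℤ) ((i' : ℕ) : ℤ) ((j' : ℕ) : ℤ)
        have hnat : 2 * (β + α + δ) + (((i : ℕ) : ℤ) - ((j' : ℕ) : ℤ)).natAbs
            = (2 * β + (((i' : ℕ) : ℤ) - ((j' : ℕ) : ℤ)).natAbs)
              + (2 * α + (((i : ℕ) : ℤ) - ((i' : ℕ) : ℤ)).natAbs) := by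
          have : δ = dlt ((i : ℕ) : ℤ) ((i' : ℕ) : ℤ) ((j' : ℕ) : ℤ) := hδ
          omega
        rw [hnat]
        push_cast
        ring
      · simp only [KLRW.mulB, if_neg hij]
        simp
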